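/- Let p be a prime and x an integer with 1 ≤ x < p, and run the Extended Euclidean Algorithm on (p, x) with termination index k. Then for every j with 1 ≤ j ≤ k−1, p < 2^(Σ_{i=1}^{j}(⌊log₂ q_i⌋ + 1)) · r_j. -/
import Mathlib


/-- Remainder sequence of the Extended Euclidean Algorithm on `(p, x)`:
`r 0 = p`, `r 1 = x`, and `r (i+1) = r (i-1) - ⌊r (i-1) / r i⌋ * r i` for `i ≥ 1`. -/
def eeaR (p x : ℕ) : ℕ → ℕ
  | 0 => p
  | 1 => x
  | (i + 2) => eeaR p x i - (eeaR p x i / eeaR p x (i + 1)) * eeaR p x (i + 1)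

/-- Quotient sequence `q i = ⌊r (i-1) / r i⌋` of the Extended Euclidean Algorithm. -/
def eeaQ (p x i : ℕ) : ℕ := eeaR p x (i - 1) / eeaR p x i

/-- Cofactor sequence of the Extended Euclidean Algorithm:
`t 0 = 0`, `t 1 = 1`, and `t (i+1) = t (i-1) + q i * t i` for `i ≥ 1`. -/
def eeaT (p x : ℕ) : ℕ → ℕ
  | 0 => 0
  | 1 => 1
  | (i + 2) => eeaT p x i + eeaQ p x (i + 1) * eeaT p x (i + 1)

lemma key_div_lt (a b : ℕ) (hb : 0 < b) : a < 2 ^ (Nat.log 2 (a / b) + 1) * b := by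
  have h1 : a < (a / b + 1) * b := by
    have hd := Nat.div_add_mod a b
    have hm := Nat.mod_lt a hb
    nlinarith [Nat.div_mul_le_self a b]
  have h2 : a / b + 1 ≤ 2 ^ (Nat.log 2 (a / b) + 1) :=
    Nat.lt_pow_succ_log_self (by norm_num) _
  calc a < (a / b + 1) * b := h1
    _ ≤ 2 ^ (Nat.log 2 (a / b) + 1) * b := Nat.mul_le_mul_right b h2

/-- For a prime `p` and `1 ≤ x < p`, with termination index `k`:
for every `1 ≤ j ≤ k−1`, `p < 2^(Σ_{i=1}^{j}(⌊log₂ q_i⌋ + 1)) · r_j`. -/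
theorem stmt_10 (p x : ℕ) (hp : p.Prime) (hx : 1 ≤ x) (hxp : x < p)
    (k : ℕ) (hk : eeaR p x k = 0) (hkmin : ∀ m < k, eeaR p x m ≠ 0) :
    ∀ j, 1 ≤ j → j ≤ k - 1 →
      p < 2 ^ (∑ i ∈ Finset.Icc 1 j, (Nat.log 2 (eeaQ p x i) + 1)) * eeaR p x j := by
  have hkpos : 0 < k := by
    rcases Nat.eq_zero_or_pos k with h | h
    · exfalso; rw [h] at hk; exact hp.pos.ne' (by simpa [eeaR] using hk)
    · exact h
  have hpos : ∀ m < k, 0 < eeaR p x m := fun m hm => Nat.pos_of_ne_zero (hkmin m hm)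
  intro j
  induction j with
  | zero => omega
  | succ n ih =>
    intro hj1 hjk
    rcases Nat.eq_zero_or_pos n with h0 | hn
    · subst h0
      rw [Finset.Icc_self, Finset.sum_singleton]
      have hq : eeaQ p x 1 = p / x := rfl
      have hr : eeaR p x 1 = x := rfl
      rw [hq, hr]
      exact key_div_lt p x hx
    · have ihh := ih hn (by omega)
      have hn1k : n + 1 < k := by omega
      have h1 : eeaR p x n < 2 ^ (Nat.log 2 (eeaQ p x (n + 1)) + 1) * eeaR p x (n + 1) := by
        have hq : eeaQ p x (n + 1) = eeaR p x n / eeaR p x (n + 1) := rfl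
        rw [hq]
        exact key_div_lt _ _ (hpos (n + 1) hn1k)
      rw [Finset.sum_Icc_succ_top (by omega : 1 ≤ n + 1), pow_add, mul_assoc]
      calc p < 2 ^ (∑ i ∈ Finset.Icc 1 n, (Nat.log 2 (eeaQ p x i) + 1)) * eeaR p x n := ihh
        _ ≤ _ := Nat.mul_le_mul_left _ h1.le
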